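/- Let f be a 1-periodic trigonometric polynomial with ∫₀¹ f = 0 and Fourier coefficients f̂(h), and let X₁, X₂, … be i.i.d. real random variables with characteristic function φ satisfying |φ(2πh)| < 1 for all nonzero integers h and ψ(k) = sup_t |P({S_k} ≤ t) − t| summable in k. Let U be uniform on [0,1) independent of the X_j. Then C(f,f) := E f(U)² + 2 ∑_{k=1}^∞ E f(U) f(U + S_k) = ∑_{h ≠ 0} |f̂(h)|² (1 − |φ(2πh)|²) / |1 − φ(2πh)|². -/

import Mathlib

open MeasureTheory ProbabilityTheory

namespace Stmt9Aux

lemma norm_exp_I (m : ℤ) (x : ℝ) : ‖Complex.exp (2 * Real.pi * m * x * Complex.I)‖ = 1 := by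
  rw [show (2 * Real.pi * m * x * Complex.I : ℂ)
      = ((2 * Real.pi * m * x : ℝ) : ℂ) * Complex.I by push_cast; ring]
  rw [Complex.norm_exp_ofReal_mul_I]

lemma meas_exp_I (m : ℤ) : Measurable fun x : ℝ => Complex.exp (2 * Real.pi * m * x * Complex.I) := by
  fun_prop

lemma meas_exp_I' (t : ℝ) : Measurable fun x : ℝ => Complex.exp ((t : ℂ) * x * Complex.I) := by
  fun_prop

lemma norm_exp_I' (t : ℝ) (x : ℝ) : ‖Complex.exp ((t : ℂ) * x * Complex.I)‖ = 1 := by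
  rw [show ((t : ℂ) * x * Complex.I : ℂ) = ((t * x : ℝ) : ℂ) * Complex.I by push_cast; ring]
  rw [Complex.norm_exp_ofReal_mul_I]

lemma bdd_integrable {Ω : Type*} [MeasurableSpace Ω] (μ : Measure Ω) [IsProbabilityMeasure μ]
    {g : Ω → ℂ} (hm : AEStronglyMeasurable g μ) (C : ℝ) (hb : ∀ ω, ‖g ω‖ ≤ C) :
    Integrable g μ :=
  (integrable_const C).mono' hm (Filter.Eventually.of_forall hb)

lemma indep_mul {Ω : Type*} [MeasurableSpace Ω] {μ : Measure Ω} [IsProbabilityMeasure μ]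
    {A B : Ω → ℝ} (h : IndepFun A B μ) (hA : Measurable A) (hB : Measurable B)
    {g₁ g₂ : ℝ → ℂ} (hg₁ : Measurable g₁) (hg₂ : Measurable g₂) :
    ∫ ω, g₁ (A ω) * g₂ (B ω) ∂μ = (∫ ω, g₁ (A ω) ∂μ) * ∫ ω, g₂ (B ω) ∂μ := by
  have hmap : μ.map (fun ω => (A ω, B ω)) = (μ.map A).prod (μ.map B) :=
    (ProbabilityTheory.indepFun_iff_map_prod_eq_prod_map_map hA.aemeasurable hB.aemeasurable).mp h
  haveI : IsProbabilityMeasure (μ.map A) := Measure.isProbabilityMeasure_map hA.aemeasurable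
  haveI : IsProbabilityMeasure (μ.map B) := Measure.isProbabilityMeasure_map hB.aemeasurable
  have h1 : ∫ ω, g₁ (A ω) * g₂ (B ω) ∂μ
      = ∫ p : ℝ × ℝ, g₁ p.1 * g₂ p.2 ∂(μ.map (fun ω => (A ω, B ω))) :=
    (integral_map (hA.prodMk hB).aemeasurable
      ((hg₁.comp measurable_fst).mul (hg₂.comp measurable_snd)).aestronglyMeasurable).symm
  rw [h1, hmap, integral_prod_mul,
    integral_map hA.aemeasurable hg₁.aestronglyMeasurable,
    integral_map hB.aemeasurable hg₂.aestronglyMeasurable]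

lemma aux_int_char (m : ℤ) :
    ∫ x in Set.Ico (0:ℝ) 1, Complex.exp (2 * Real.pi * m * x * Complex.I)
      = if m = 0 then 1 else 0 := by
  rcases eq_or_ne m 0 with rfl | hm
  · simp
  · have hc : (2 * Real.pi * m * Complex.I : ℂ) ≠ 0 := by
      simp [Real.pi_ne_zero, Complex.I_ne_zero, hm, Complex.ext_iff]
    have h1 : ∫ x in Set.Ico (0:ℝ) 1, Complex.exp (2 * Real.pi * m * x * Complex.I)
        = ∫ x in (0:ℝ)..1, Complex.exp ((2 * Real.pi * m * Complex.I) * x) := by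
      rw [intervalIntegral.integral_of_le zero_le_one,
        MeasureTheory.integral_Ioc_eq_integral_Ioo,
        MeasureTheory.integral_Ico_eq_integral_Ioo]
      refine setIntegral_congr_fun measurableSet_Ioo fun x _ => ?_
      ring_nf
    rw [h1, integral_exp_mul_complex hc]
    have h2 : Complex.exp (2 * Real.pi * m * Complex.I * ((1:ℝ):ℂ)) = 1 := by
      rw [show (2 * Real.pi * m * Complex.I * ((1:ℝ):ℂ) : ℂ) = m * (2 * Real.pi * Complex.I) by
        push_cast; ring]
      exact Complex.exp_int_mul_two_pi_mul_I m
    rw [h2]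
    simp [hm]

lemma aux_re (w : ℂ) (hw : ‖w‖ < 1) :
    (1 + 2 * (w * (1 - w)⁻¹)).re = (1 - ‖w‖ ^ 2) / ‖1 - w‖ ^ 2 := by
  have h0 : (1 : ℂ) - w ≠ 0 := by
    intro h
    rw [sub_eq_zero] at h
    rw [← h] at hw
    simp at hw
  have h1 : 1 + 2 * (w * (1 - w)⁻¹) = (1 + w) / (1 - w) := by
    field_simp
    ring
  have h2 : Complex.normSq (1 - w) ≠ 0 := by simpa [Complex.normSq_eq_zero] using h0
  rw [h1, Complex.div_re, Complex.sq_norm, Complex.sq_norm]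
  field_simp
  simp only [Complex.normSq_apply, Complex.add_re, Complex.sub_re, Complex.one_re,
    Complex.add_im, Complex.sub_im, Complex.one_im]
  ring

end Stmt9Aux

open Stmt9Aux in
/-- For a mean-zero real trigonometric polynomial
`f(x) = ∑_{0<|h|≤H} c_h e^{2πihx}`, i.i.d. sums `S_k` with characteristic function
`φ` satisfying `|φ(2πh)| < 1` for `h ≠ 0` and summable Kolmogorov distances `ψ(k)`,
and `U` uniform on `[0,1)` independent of the sequence,
`C(f,f) = E f(U)² + 2 ∑_{k≥1} E f(U) f(U+S_k)
        = ∑_{h≠0} |c_h|² (1 − |φ(2πh)|²)/|1 − φ(2πh)|²`. -/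
theorem stmt9
    {Ω : Type*} [MeasurableSpace Ω] (P : Measure Ω) [IsProbabilityMeasure P]
    (X : ℕ → Ω → ℝ) (hXm : ∀ i, Measurable (X i))
    (hindep : iIndepFun (m := fun _ => Real.measurableSpace) X P)
    (hident : ∀ i, Measure.map (X i) P = Measure.map (X 0) P)
    (S : ℕ → Ω → ℝ) (hS : ∀ k ω, S k ω = ∑ j ∈ Finset.range k, X j ω)
    (ψ : ℕ → ℝ)
    (hψ : ∀ k, ψ k = ⨆ t : Set.Icc (0:ℝ) 1,
        |(P {ω | Int.fract (S k ω) ≤ (t : ℝ)}).toReal - (t : ℝ)|)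
    (hψsum : Summable (fun k : ℕ => ψ (k+1)))
    (φ : ℝ → ℂ) (hφ : ∀ x, φ x = ∫ ω, Complex.exp (x * X 0 ω * Complex.I) ∂P)
    (hφlt : ∀ h : ℤ, h ≠ 0 → ‖φ (2 * Real.pi * h)‖ < 1)
    (H : ℕ) (c : ℤ → ℂ) (hc0 : c 0 = 0)
    (f : ℝ → ℝ)
    (hf : ∀ x : ℝ, (f x : ℂ) =
      ∑ h ∈ Finset.Icc (-(H:ℤ)) (H:ℤ), c h * Complex.exp (2 * Real.pi * h * x * Complex.I))
    (U : Ω → ℝ) (hUm : Measurable U)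
    (hUunif : Measure.map U P = volume.restrict (Set.Ico (0:ℝ) 1))
    (hUindep : IndepFun U (fun ω => (X · ω)) P) :
    (∫ ω, (f (U ω))^2 ∂P) + 2 * ∑' k : ℕ, ∫ ω, f (U ω) * f (U ω + S (k+1) ω) ∂P =
      ∑ h ∈ (Finset.Icc (-(H:ℤ)) (H:ℤ)).erase 0,
        (‖c h‖)^2 * (1 - (‖φ (2 * Real.pi * h)‖)^2) /
          (‖1 - φ (2 * Real.pi * h)‖)^2 := by
  classical
  set I : Finset ℤ := Finset.Icc (-(H:ℤ)) (H:ℤ) with hIdef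
  have hneg : ∀ h ∈ I, -h ∈ I := by
    intro h hh
    simp only [hIdef, Finset.mem_Icc] at hh ⊢
    omega
  have hSm : ∀ k, Measurable (S k) := by
    intro k
    have hk : S k = fun ω => ∑ j ∈ Finset.range k, X j ω := funext fun ω => hS k ω
    rw [hk]
    exact Finset.measurable_sum _ fun j _ => hXm j
  have hfc : Continuous f := by
    have : f = fun x : ℝ => (∑ h ∈ I, c h * Complex.exp (2 * Real.pi * h * x * Complex.I)).re := by
      funext x
      rw [← hf x, Complex.ofReal_re]
    rw [this]
    exact Complex.continuous_re.comp (by fun_prop)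
  have hfm : Measurable f := hfc.measurable
  -- characteristic function of U
  have hU_char : ∀ m : ℤ,
      (∫ ω, Complex.exp (2 * Real.pi * m * (U ω) * Complex.I) ∂P) = if m = 0 then 1 else 0 := by
    intro m
    have h1 : ∫ x, Complex.exp (2 * Real.pi * m * x * Complex.I) ∂(P.map U)
        = ∫ ω, Complex.exp (2 * Real.pi * m * (U ω) * Complex.I) ∂P :=
      integral_map hUm.aemeasurable (Stmt9Aux.meas_exp_I m).aestronglyMeasurable
    rw [← h1, hUunif, Stmt9Aux.aux_int_char m]
  -- characteristic function of S k
  have hS_char : ∀ (t : ℝ) (k : ℕ),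
      (∫ ω, Complex.exp ((t : ℂ) * (S k ω) * Complex.I) ∂P) = (φ t) ^ k := by
    intro t k
    induction k with
    | zero =>
      have h1 : ∀ ω, Complex.exp ((t:ℂ) * (S 0 ω) * Complex.I) = 1 := by
        intro ω
        rw [hS 0 ω]
        simp
      simp only [h1]
      simp
    | succ k ih =>
      have hXk : ∫ ω, Complex.exp ((t:ℂ) * (X k ω) * Complex.I) ∂P = φ t := by
        have e1 : ∫ x, Complex.exp ((t:ℂ) * x * Complex.I) ∂(P.map (X k))
            = ∫ ω, Complex.exp ((t:ℂ) * (X k ω) * Complex.I) ∂P :=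
          integral_map (hXm k).aemeasurable (Stmt9Aux.meas_exp_I' t).aestronglyMeasurable
        have e0 : ∫ x, Complex.exp ((t:ℂ) * x * Complex.I) ∂(P.map (X 0))
            = ∫ ω, Complex.exp ((t:ℂ) * (X 0 ω) * Complex.I) ∂P :=
          integral_map (hXm 0).aemeasurable (Stmt9Aux.meas_exp_I' t).aestronglyMeasurable
        rw [← e1, hident k, e0, ← hφ t]
      have hik : IndepFun (S k) (X k) P := by
        have h1 := hindep.indepFun_finsetSum_of_notMem hXm
          (Finset.notMem_range_self (n := k))
        have h2 : (∑ j ∈ Finset.range k, X j) = S k := by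
          funext ω
          rw [hS k ω, Finset.sum_apply]
        rwa [h2] at h1
      have hsplit : ∀ ω, Complex.exp ((t:ℂ) * (S (k+1) ω) * Complex.I)
          = Complex.exp ((t:ℂ) * (S k ω) * Complex.I)
            * Complex.exp ((t:ℂ) * (X k ω) * Complex.I) := by
        intro ω
        rw [← Complex.exp_add]
        congr 1
        rw [hS (k+1) ω, Finset.sum_range_succ, ← hS k ω]
        push_cast
        ring
      calc ∫ ω, Complex.exp ((t:ℂ) * (S (k+1) ω) * Complex.I) ∂P
          = ∫ ω, Complex.exp ((t:ℂ) * (S k ω) * Complex.I)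
              * Complex.exp ((t:ℂ) * (X k ω) * Complex.I) ∂P := by
            simp only [hsplit]
        _ = (∫ ω, Complex.exp ((t:ℂ) * (S k ω) * Complex.I) ∂P)
              * ∫ ω, Complex.exp ((t:ℂ) * (X k ω) * Complex.I) ∂P :=
            Stmt9Aux.indep_mul hik (hSm k) (hXm k)
              (Stmt9Aux.meas_exp_I' t) (Stmt9Aux.meas_exp_I' t)
        _ = (φ t)^k * φ t := by rw [ih, hXk]
        _ = (φ t)^(k+1) := (pow_succ _ _).symm
  -- master expansion
  have master : ∀ (Y : Ω → ℝ), Measurable Y → ∀ (J : ℤ → ℂ),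
      (∀ m h' : ℤ, (∫ ω, Complex.exp (2 * Real.pi * m * (U ω) * Complex.I)
          * Complex.exp (2 * Real.pi * h' * (Y ω) * Complex.I) ∂P)
          = (if m = 0 then 1 else 0) * J h') →
      ((∫ ω, f (U ω) * f (U ω + Y ω) ∂P : ℝ) : ℂ) = ∑ h ∈ I, c (-h) * c h * J h := by
    intro Y hYm J hJ
    have hint : ∀ (a : ℂ) (m h' : ℤ), Integrable (fun ω =>
        a * (Complex.exp (2 * Real.pi * m * (U ω) * Complex.I)
          * Complex.exp (2 * Real.pi * h' * (Y ω) * Complex.I))) P := by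
      intro a m h'
      refine Stmt9Aux.bdd_integrable P ?_ ‖a‖ fun ω => ?_
      · exact (measurable_const.mul (((Stmt9Aux.meas_exp_I m).comp hUm).mul
          ((Stmt9Aux.meas_exp_I h').comp hYm))).aestronglyMeasurable
      · rw [norm_mul, norm_mul, Stmt9Aux.norm_exp_I, Stmt9Aux.norm_exp_I]
        simp
    have hri : ∀ ω, ((f (U ω) * f (U ω + Y ω) : ℝ) : ℂ)
        = ∑ h ∈ I, ∑ h' ∈ I, (c h * c h') *
          (Complex.exp (2 * Real.pi * ((h + h' : ℤ)) * (U ω) * Complex.I)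
            * Complex.exp (2 * Real.pi * h' * (Y ω) * Complex.I)) := by
      intro ω
      push_cast
      rw [hf (U ω), hf (U ω + Y ω), Finset.sum_mul_sum]
      refine Finset.sum_congr rfl fun h hh => Finset.sum_congr rfl fun h' hh' => ?_
      have e1 : Complex.exp (2 * Real.pi * h' * ((U ω + Y ω : ℝ)) * Complex.I)
          = Complex.exp (2 * Real.pi * h' * (U ω) * Complex.I)
            * Complex.exp (2 * Real.pi * h' * (Y ω) * Complex.I) := by
        rw [← Complex.exp_add]
        congr 1
        push_cast
        ring
      have e2 : Complex.exp (2 * Real.pi * h * (U ω) * Complex.I)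
          * Complex.exp (2 * Real.pi * h' * (U ω) * Complex.I)
          = Complex.exp (2 * Real.pi * ((h : ℂ) + (h' : ℂ)) * (U ω) * Complex.I) := by
        rw [← Complex.exp_add]
        congr 1
        push_cast
        ring
      rw [e1, ← e2]
      ring
    calc ((∫ ω, f (U ω) * f (U ω + Y ω) ∂P : ℝ) : ℂ)
        = ∫ ω, ((f (U ω) * f (U ω + Y ω) : ℝ) : ℂ) ∂P := integral_ofReal.symm
      _ = ∫ ω, ∑ h ∈ I, ∑ h' ∈ I, (c h * c h') *
            (Complex.exp (2 * Real.pi * ((h + h' : ℤ)) * (U ω) * Complex.I)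
              * Complex.exp (2 * Real.pi * h' * (Y ω) * Complex.I)) ∂P :=
          integral_congr_ae (Filter.Eventually.of_forall hri)
      _ = ∑ h ∈ I, ∑ h' ∈ I, (c h * c h') * ((if (h + h' : ℤ) = 0 then 1 else 0) * J h') := by
          rw [integral_finset_sum _ fun h _ => integrable_finset_sum _ fun h' _ => hint _ _ _]
          refine Finset.sum_congr rfl fun h hh => ?_
          rw [integral_finset_sum _ fun h' _ => hint _ _ _]
          refine Finset.sum_congr rfl fun h' hh' => ?_
          rw [MeasureTheory.integral_const_mul, hJ (h + h') h']
      _ = ∑ h' ∈ I, ∑ h ∈ I, (if h = -h' then (c h * c h') * J h' else 0) := by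
          rw [Finset.sum_comm]
          refine Finset.sum_congr rfl fun h' _ => Finset.sum_congr rfl fun h hh => ?_
          by_cases hcs : h = -h'
          · simp [hcs]
          · have hne : ¬ (h + h' : ℤ) = 0 := by omega
            simp [hcs, hne]
      _ = ∑ h ∈ I, c (-h) * c h * J h := by
          refine Finset.sum_congr rfl fun h' hh' => ?_
          rw [Finset.sum_ite_eq' I (-h') fun h => (c h * c h') * J h']
          simp [hneg h' hh', mul_assoc]
  -- Fourier coefficients via integrals, conjugation symmetry
  have hint2 : ∀ (h m : ℤ), IntegrableOn
      (fun x : ℝ => c h * Complex.exp (2 * Real.pi * h * x * Complex.I)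
        * Complex.exp (2 * Real.pi * m * x * Complex.I)) (Set.Ico 0 1) volume := by
    intro h m
    refine (Continuous.integrableOn_Icc ?_).mono_set Set.Ico_subset_Icc_self
    fun_prop
  have key1 : ∀ h₀ ∈ I, (∫ x in Set.Ico (0:ℝ) 1,
      (f x : ℂ) * Complex.exp (2 * Real.pi * (-h₀ : ℤ) * x * Complex.I)) = c h₀ := by
    intro h₀ hh₀
    have hexp : ∀ x : ℝ, (f x : ℂ) * Complex.exp (2 * Real.pi * (-h₀ : ℤ) * x * Complex.I)
        = ∑ h ∈ I, c h * Complex.exp (2 * Real.pi * h * x * Complex.I)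
          * Complex.exp (2 * Real.pi * (-h₀ : ℤ) * x * Complex.I) := by
      intro x
      rw [hf x, Finset.sum_mul]
    rw [setIntegral_congr_fun measurableSet_Ico (fun x _ => hexp x),
      integral_finset_sum _ fun h _ => hint2 h (-h₀)]
    have e3 : ∀ h ∈ I, (∫ x in Set.Ico (0:ℝ) 1,
        c h * Complex.exp (2 * Real.pi * h * x * Complex.I)
          * Complex.exp (2 * Real.pi * (-h₀:ℤ) * x * Complex.I))
        = c h * (if (h - h₀ : ℤ) = 0 then 1 else 0) := by
      intro h _
      have e4 : ∀ x ∈ Set.Ico (0:ℝ) 1, c h * Complex.exp (2 * Real.pi * h * x * Complex.I)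
          * Complex.exp (2 * Real.pi * (-h₀:ℤ) * x * Complex.I)
          = c h * Complex.exp (2 * Real.pi * ((h - h₀ : ℤ)) * x * Complex.I) := by
        intro x _
        rw [mul_assoc, ← Complex.exp_add]
        congr 2
        push_cast
        ring
      rw [setIntegral_congr_fun measurableSet_Ico e4, MeasureTheory.integral_const_mul,
        Stmt9Aux.aux_int_char]
    rw [Finset.sum_congr rfl e3]
    have e5 : ∀ h ∈ I, c h * (if (h - h₀:ℤ) = 0 then (1:ℂ) else 0)
        = if h = h₀ then c h else 0 := by
      intro h _
      by_cases hcs : h = h₀ <;> simp [hcs, sub_eq_zero]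
    rw [Finset.sum_congr rfl e5, Finset.sum_ite_eq' I h₀ c]
    simp [hh₀]
  have hsym : ∀ h ∈ I, (starRingEnd ℂ) (c h) = c (-h) := by
    intro h hh
    have h2 := key1 (-h) (hneg h hh)
    rw [neg_neg] at h2
    have h3 := congrArg (starRingEnd ℂ) (key1 h hh)
    rw [← integral_conj] at h3
    have h4 : ∀ x ∈ Set.Ico (0:ℝ) 1, (starRingEnd ℂ) ((f x : ℂ)
        * Complex.exp (2 * Real.pi * (-h:ℤ) * x * Complex.I))
        = (f x : ℂ) * Complex.exp (2 * Real.pi * (h:ℤ) * x * Complex.I) := by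
      intro x _
      rw [map_mul, Complex.conj_ofReal]
      congr 1
      rw [← Complex.exp_conj]
      congr 1
      simp only [map_mul, Complex.conj_ofReal, Complex.conj_I, map_ofNat, map_intCast]
      push_cast
      ring
    rw [setIntegral_congr_fun measurableSet_Ico h4, h2] at h3
    exact h3.symm
  have hcc : ∀ h ∈ I, c (-h) * c h = ((Complex.normSq (c h) : ℝ) : ℂ) := by
    intro h hh
    rw [← hsym h hh, mul_comm, Complex.mul_conj]
  -- application to E f(U)²
  have hJA : ∀ m h' : ℤ, (∫ ω, Complex.exp (2 * Real.pi * m * (U ω) * Complex.I)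
      * Complex.exp (2 * Real.pi * h' * (((fun _ : Ω => (0:ℝ)) ω)) * Complex.I) ∂P)
      = (if m = 0 then 1 else 0) * 1 := by
    intro m h'
    simp only [Complex.ofReal_zero, mul_zero, zero_mul, Complex.exp_zero, mul_one]
    rw [hU_char m]
  have hA : ((∫ ω, (f (U ω))^2 ∂P : ℝ) : ℂ) = ∑ h ∈ I, ((Complex.normSq (c h) : ℝ) : ℂ) := by
    have h0 : (∫ ω, (f (U ω))^2 ∂P) = ∫ ω, f (U ω) * f (U ω + (fun _ : Ω => (0:ℝ)) ω) ∂P := by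
      refine integral_congr_ae (Filter.Eventually.of_forall fun ω => ?_)
      simp [pow_two]
    rw [h0, master (fun _ => (0:ℝ)) measurable_const _ hJA]
    refine Finset.sum_congr rfl fun h hh => ?_
    rw [mul_one, hcc h hh]
  -- application to E f(U) f(U + S_k)
  have hJB : ∀ k : ℕ, ∀ m h' : ℤ, (∫ ω, Complex.exp (2 * Real.pi * m * (U ω) * Complex.I)
      * Complex.exp (2 * Real.pi * h' * (S (k+1) ω) * Complex.I) ∂P)
      = (if m = 0 then 1 else 0) * (φ (2 * Real.pi * h')) ^ (k+1) := by
    intro k m h'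
    have hindUS : IndepFun U (S (k+1)) P := by
      have hg : Measurable fun v : ℕ → ℝ => ∑ j ∈ Finset.range (k+1), v j :=
        Finset.measurable_sum _ fun j _ => measurable_pi_apply j
      have h1 := hUindep.comp measurable_id hg
      have h2 : ((fun v : ℕ → ℝ => ∑ j ∈ Finset.range (k+1), v j) ∘ fun ω => (X · ω)) = S (k+1) := by
        funext ω
        simp [Function.comp, hS]
      rwa [h2] at h1
    rw [Stmt9Aux.indep_mul hindUS hUm (hSm (k+1)) (Stmt9Aux.meas_exp_I m) (Stmt9Aux.meas_exp_I h'),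
      hU_char m]
    congr 1
    have hcast : ∀ s : ℝ, (2 * Real.pi * (h':ℂ) * (s : ℂ) * Complex.I)
        = ((2 * Real.pi * (h':ℝ) : ℝ) : ℂ) * (s : ℂ) * Complex.I := by
      intro s
      push_cast
      ring
    simp_rw [hcast]
    exact hS_char (2 * Real.pi * h') (k+1)
  have hB : ∀ k : ℕ, ((∫ ω, f (U ω) * f (U ω + S (k+1) ω) ∂P : ℝ) : ℂ)
      = ∑ h ∈ I, ((Complex.normSq (c h) : ℝ) : ℂ) * (φ (2 * Real.pi * h)) ^ (k+1) := by
    intro k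
    rw [master (S (k+1)) (hSm (k+1)) _ (hJB k)]
    exact Finset.sum_congr rfl fun h hh => by rw [hcc h hh]
  -- geometric series and final assembly
  have hzlt : ∀ h : ℤ, h ≠ 0 → ‖φ (2 * Real.pi * h)‖ < 1 := by
    intro h hh
    exact hφlt h hh
  have hsummC : ∀ h ∈ I, Summable fun k : ℕ =>
      ((Complex.normSq (c h) : ℝ) : ℂ) * (φ (2 * Real.pi * h)) ^ (k+1) := by
    intro h _
    by_cases h0 : h = 0
    · refine summable_zero.congr fun k => ?_
      simp [h0, hc0]
    · refine ((summable_geometric_of_norm_lt_one (hzlt h h0)).mul_left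
        (((Complex.normSq (c h) : ℝ) : ℂ) * φ (2 * Real.pi * h))).congr fun k => ?_
      ring
  have hgeo : ∀ h ∈ I, (∑' k : ℕ, ((Complex.normSq (c h) : ℝ) : ℂ) * (φ (2 * Real.pi * h)) ^ (k+1))
      = ((Complex.normSq (c h) : ℝ) : ℂ)
        * (φ (2 * Real.pi * h) * (1 - φ (2 * Real.pi * h))⁻¹) := by
    intro h _
    by_cases h0 : h = 0
    · simp [h0, hc0]
    · rw [tsum_mul_left]
      congr 1
      have h1 : ∀ k : ℕ, (φ (2 * Real.pi * h)) ^ (k+1)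
          = φ (2 * Real.pi * h) * (φ (2 * Real.pi * h)) ^ k := fun k => by ring
      rw [tsum_congr h1, tsum_mul_left, tsum_geometric_of_norm_lt_one (hzlt h h0)]
  have key : (((∫ ω, (f (U ω))^2 ∂P)
        + 2 * ∑' k : ℕ, ∫ ω, f (U ω) * f (U ω + S (k+1) ω) ∂P : ℝ) : ℂ)
      = ∑ h ∈ I, ((Complex.normSq (c h) : ℝ) : ℂ)
          * (1 + 2 * (φ (2 * Real.pi * h) * (1 - φ (2 * Real.pi * h))⁻¹)) := by
    push_cast [Complex.ofReal_tsum]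
    rw [hA, tsum_congr hB, Summable.tsum_finsetSum hsummC, Finset.sum_congr rfl hgeo,
      Finset.mul_sum, ← Finset.sum_add_distrib]
    refine Finset.sum_congr rfl fun h _ => ?_
    ring
  have final := congrArg Complex.re key
  rw [Complex.ofReal_re, Complex.re_sum] at final
  rw [final]
  have hterm : ∀ h ∈ I, ((((Complex.normSq (c h) : ℝ)) : ℂ)
      * (1 + 2 * (φ (2 * Real.pi * h) * (1 - φ (2 * Real.pi * h))⁻¹))).re
      = Complex.normSq (c h)
        * (1 + 2 * (φ (2 * Real.pi * h) * (1 - φ (2 * Real.pi * h))⁻¹)).re :=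
    fun h _ => Complex.re_ofReal_mul _ _
  rw [Finset.sum_congr rfl hterm,
    ← Finset.sum_erase I (f := fun h => Complex.normSq (c h)
      * (1 + 2 * (φ (2 * Real.pi * h) * (1 - φ (2 * Real.pi * h))⁻¹)).re) (a := 0)
      (by simp [hc0])]
  refine Finset.sum_congr rfl fun h hh => ?_
  have h0 : h ≠ 0 := Finset.ne_of_mem_erase hh
  rw [Stmt9Aux.aux_re _ (hzlt h h0), ← Complex.sq_norm (c h), mul_div_assoc]
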